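/- Let n = (n_1, ..., n_k) be an integer sequence with n_j = 0 for some 1 < j < k. Then s^n_{k+1}(t) = -s^m_{k-1}(t), where m is the sequence (n_1, ..., n_{j-2}, n_{j-1} + n_{j+1}, n_{j+2}, ..., n_k) of length k-2 obtained by deleting n_j and merging its neighbors. -/
import Mathlib


/-- n-Chebyshev polynomials: s 0 = 0, s 1 = 1, s_{k+2}(t) = n_{k+1} t s_{k+1}(t) - s_k(t)
(0-indexed sequence: the 1-indexed entry n_i is `n (i-1)`). -/
def sChe (n : ℕ → ℤ) : ℕ → ℂ → ℂ
  | 0, _ => 0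
  | 1, _ => 1
  | k + 2, t => (n k : ℂ) * t * sChe n (k + 1) t - sChe n k t

lemma sChe_congr (n m : ℕ → ℤ) (t : ℂ) :
    ∀ r, (∀ i, i + 2 ≤ r → n i = m i) → sChe n r t = sChe m r t := by
  intro r
  induction r using Nat.strong_induction_on with
  | _ r ih =>
    match r with
    | 0 => intro _; rfl
    | 1 => intro _; rfl
    | k + 2 =>
      intro h
      simp only [sChe, h k (by omega),
        ih (k+1) (by omega) (fun i hi => h i (by omega)),
        ih k (by omega) (fun i hi => h i (by omega))]

theorem sChe_zero_entry_merge (n : ℕ → ℤ) (k j : ℕ) (h1 : 1 < j) (h2 : j < k)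
    (hz : n (j - 1) = 0) (t : ℂ) :
    sChe n (k + 1) t =
      - sChe (fun i => if i < j - 2 then n i
          else if i = j - 2 then n (j - 2) + n j else n (i + 2)) (k - 1) t := by
  obtain ⟨a, rfl⟩ : ∃ a, j = a + 2 := ⟨j - 2, by omega⟩
  simp only [show a + 2 - 1 = a + 1 from rfl, show a + 2 - 2 = a from rfl] at *
  set m : ℕ → ℤ := fun i => if i < a then n i
      else if i = a then n a + n (a + 2) else n (i + 2) with hm
  have hcongr : ∀ r, r ≤ a + 1 → sChe n r t = sChe m r t := by
    intro r hr
    apply sChe_congr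
    intro i hi
    simp only [hm, if_pos (show i < a by omega)]
  have key : ∀ i, sChe n (a + 3 + i) t = - sChe m (a + 1 + i) t ∧
      sChe n (a + 4 + i) t = - sChe m (a + 2 + i) t := by
    intro i
    induction i with
    | zero =>
      have e1 : sChe n (a + 3) t = - sChe m (a + 1) t := by
        show sChe n (a + 1 + 2) t = _
        rw [sChe, hz, ← hcongr (a+1) le_rfl]
        push_cast
        ring
      refine ⟨e1, ?_⟩
      show sChe n (a + 2 + 2) t = - sChe m (a + 2) t
      rw [sChe, e1]
      show _ = -((m a : ℂ) * t * sChe m (a+1) t - sChe m a t)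
      have : sChe n (a + 2) t = (n a : ℂ) * t * sChe n (a+1) t - sChe n a t := rfl
      rw [this, ← hcongr (a+1) le_rfl, ← hcongr a (by omega)]
      have hma : m a = n a + n (a + 2) := by simp [hm]
      rw [hma]
      push_cast
      ring
    | succ i ih =>
      obtain ⟨e1, e2⟩ := ih
      constructor
      · rw [show a + 3 + (i + 1) = a + 4 + i by omega,
          show a + 1 + (i + 1) = a + 2 + i by omega]
        exact e2
      have hmn : m (a + 1 + i) = n (a + 3 + i) := by
        simp only [hm, if_neg (show ¬ a + 1 + i < a by omega),
          if_neg (show ¬ a + 1 + i = a by omega)]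
        congr 1
        omega
      have l1 : sChe n (a + 3 + i + 2) t
          = (n (a + 3 + i) : ℂ) * t * sChe n (a + 3 + i + 1) t - sChe n (a + 3 + i) t := rfl
      have l2 : sChe m (a + 1 + i + 2) t
          = (m (a + 1 + i) : ℂ) * t * sChe m (a + 1 + i + 1) t - sChe m (a + 1 + i) t := rfl
      rw [show a + 4 + (i + 1) = a + 3 + i + 2 by omega,
        show a + 2 + (i + 1) = a + 1 + i + 2 by omega, l1, l2, hmn,
        show a + 3 + i + 1 = a + 4 + i by omega,
        show a + 1 + i + 1 = a + 2 + i by omega, e1, e2]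
      ring
  have hk : k + 1 = a + 3 + (k - a - 2) := by omega
  have hk2 : k - 1 = a + 1 + (k - a - 2) := by omega
  rw [hk, hk2, (key (k - a - 2)).1]
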